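/- With the setup of the previous statement (M* symmetric PSD of rank r, M = M* + H, ‖H‖₂ ≤ σ₁*/8), the top unit eigenvector a₁ of M satisfies ∑_{j=1}^r (a₁ᵀ a_j*)² ≥ 1 − 2.4 ‖H‖₂² / (σ₁*)², and hence (a₁ᵀ a₁*)² ≥ 1 − 2.4 ‖H‖₂²/(σ₁*)² − ∑_{j=2}^r (a₁ᵀ a_j*)². -/

import Mathlib

open Matrix Finset

/-- Euclidean norm of a vector in `Fin d → ℝ`. -/
noncomputable def vnorm {d : ℕ} (x : Fin d → ℝ) : ℝ := Real.sqrt (∑ i, x i ^ 2)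

/-- Spectral (ℓ₂ operator) norm of a real matrix. -/
noncomputable def specNorm {d : ℕ} (A : Matrix (Fin d) (Fin d) ℝ) : ℝ :=
  sSup {y : ℝ | ∃ x : Fin d → ℝ, vnorm x = 1 ∧ y = vnorm (A.mulVec x)}

private lemma dot_sum' {d : ℕ} {ι : Type*} (x : Fin d → ℝ) (s : Finset ι) (f : ι → Fin d → ℝ) :
    x ⬝ᵥ (∑ i ∈ s, f i) = ∑ i ∈ s, x ⬝ᵥ f i := by
  classical
  induction s using Finset.induction_on with
  | empty => simp
  | insert _ _ h ih => rw [Finset.sum_insert h, Finset.sum_insert h, dotProduct_add, ih]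

private lemma dot_sum_mulVec' {d : ℕ} {ι : Type*} (x y : Fin d → ℝ) (s : Finset ι)
    (f : ι → Matrix (Fin d) (Fin d) ℝ) :
    x ⬝ᵥ (∑ i ∈ s, f i).mulVec y = ∑ i ∈ s, x ⬝ᵥ (f i).mulVec y := by
  classical
  induction s using Finset.induction_on with
  | empty => simp [mulVec, dotProduct]
  | insert _ _ h ih => rw [Finset.sum_insert h, Finset.sum_insert h, add_mulVec, dotProduct_add, ih]

private lemma dot_vecMulVec' {d : ℕ} (x u v y : Fin d → ℝ) :
    x ⬝ᵥ (vecMulVec u v).mulVec y = (x ⬝ᵥ u) * (v ⬝ᵥ y) := by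
  simp only [dotProduct, mulVec, vecMulVec_apply, Finset.sum_mul, Finset.mul_sum]
  rw [Finset.sum_comm]
  congr 1; ext j; congr 1; ext i; ring

private lemma cs' {d : ℕ} (x y : Fin d → ℝ) : |x ⬝ᵥ y| ≤ vnorm x * vnorm y := by
  have h := Finset.sum_mul_sq_le_sq_mul_sq Finset.univ x y
  rw [vnorm, vnorm, ← Real.sqrt_mul (by positivity), ← Real.sqrt_sq_eq_abs]
  exact Real.sqrt_le_sqrt h

private lemma dotself' {d : ℕ} (x : Fin d → ℝ) : x ⬝ᵥ x = ∑ i, x i ^ 2 := by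
  simp [dotProduct, pow_two]

set_option maxHeartbeats 1600000 in
/-- Lower bound on the projection of the perturbed top eigenvector onto
the column space of the unperturbed matrix, and on its alignment with the top eigenvector. -/
theorem inner_ub_to_inner_lb {d r : ℕ} (hr : 0 < r)
    (Mstar H M : Matrix (Fin d) (Fin d) ℝ)
    (hM : M = Mstar + H) (hHsym : H.IsSymm) (hMsym : M.IsSymm)
    (σs : ℕ → ℝ) (as : ℕ → Fin d → ℝ)
    (hanti : ∀ i j, i ≤ j → j < r → σs j ≤ σs i)
    (hpos : ∀ j, j < r → 0 < σs j)
    (hortho : ∀ i j, i < r → j < r → as i ⬝ᵥ as j = if i = j then 1 else 0)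
    (hdecomp : Mstar = ∑ j ∈ Finset.range r, σs j • vecMulVec (as j) (as j))
    (σ1 : ℝ) (a1 : Fin d → ℝ) (ha1 : vnorm a1 = 1)
    (heig : M.mulVec a1 = σ1 • a1)
    (htop : ∀ x : Fin d → ℝ, x ⬝ᵥ M.mulVec x ≤ σ1 * (x ⬝ᵥ x))
    (hH : specNorm H ≤ σs 0 / 8) :
    (1 - 2.4 * specNorm H ^ 2 / σs 0 ^ 2 ≤ ∑ j ∈ Finset.range r, (a1 ⬝ᵥ as j) ^ 2) ∧
    (1 - 2.4 * specNorm H ^ 2 / σs 0 ^ 2 - ∑ j ∈ Finset.Ico 1 r, (a1 ⬝ᵥ as j) ^ 2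
      ≤ (a1 ⬝ᵥ as 0) ^ 2) := by
  classical
  set ε := specNorm H with hε
  have hσ0pos : 0 < σs 0 := hpos 0 hr
  -- basic unit-vector facts
  have ha1sum : (∑ i, a1 i ^ 2) = 1 := by
    have := ha1; rw [vnorm, Real.sqrt_eq_one] at this; exact this
  have ha1dot : a1 ⬝ᵥ a1 = 1 := by rw [dotself', ha1sum]
  have hunit : ∀ j, j < r → vnorm (as j) = 1 := by
    intro j hj
    have h : as j ⬝ᵥ as j = 1 := by simpa using hortho j j hj hj
    rw [vnorm, ← dotself', h, Real.sqrt_one]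
  -- spectral norm facts
  have hbdd : BddAbove {y : ℝ | ∃ x : Fin d → ℝ, vnorm x = 1 ∧ y = vnorm (H.mulVec x)} := by
    refine ⟨Real.sqrt (∑ i, ∑ j, H i j ^ 2), ?_⟩
    rintro y ⟨x, hx, rfl⟩
    have hx2 : (∑ i, x i ^ 2) = 1 := by
      have := hx; rw [vnorm, Real.sqrt_eq_one] at this; exact this
    rw [vnorm]
    apply Real.sqrt_le_sqrt
    apply Finset.sum_le_sum
    intro i _
    have hcs := Finset.sum_mul_sq_le_sq_mul_sq Finset.univ (fun j => H i j) x
    have : H.mulVec x i = ∑ j, H i j * x j := by simp [mulVec, dotProduct]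
    rw [this]
    calc (∑ j, H i j * x j) ^ 2 ≤ (∑ j, H i j ^ 2) * (∑ j, x j ^ 2) := hcs
      _ = ∑ j, H i j ^ 2 := by rw [hx2, mul_one]
  have hspec_le : ∀ u : Fin d → ℝ, vnorm u = 1 → vnorm (H.mulVec u) ≤ ε :=
    fun u hu => le_csSup hbdd ⟨u, hu, rfl⟩
  have hε0 : 0 ≤ ε := le_trans (Real.sqrt_nonneg _) (hspec_le a1 ha1)
  have hHbound : ∀ (x u : Fin d → ℝ), vnorm u = 1 → |x ⬝ᵥ H.mulVec u| ≤ vnorm x * ε := by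
    intro x u hu
    exact (cs' x _).trans (mul_le_mul_of_nonneg_left (hspec_le u hu) (Real.sqrt_nonneg _))
  -- dot products against Mstar
  have hMdot : ∀ x y : Fin d → ℝ,
      x ⬝ᵥ Mstar.mulVec y = ∑ j ∈ Finset.range r, σs j * ((x ⬝ᵥ as j) * (as j ⬝ᵥ y)) := by
    intro x y
    rw [hdecomp, dot_sum_mulVec']
    refine Finset.sum_congr rfl fun j _ => ?_
    rw [smul_mulVec, dotProduct_smul, dot_vecMulVec', smul_eq_mul]
  -- the residual vector q
  set q : Fin d → ℝ := a1 - ∑ j ∈ Finset.range r, (a1 ⬝ᵥ as j) • as j with hqdef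
  have hqa : ∀ j, j < r → as j ⬝ᵥ q = 0 := by
    intro j hj
    rw [hqdef, dotProduct_sub, dot_sum']
    have hsum : ∑ k ∈ Finset.range r, as j ⬝ᵥ (a1 ⬝ᵥ as k) • as k = a1 ⬝ᵥ as j := by
      have : ∀ k ∈ Finset.range r,
          as j ⬝ᵥ (a1 ⬝ᵥ as k) • as k = if j = k then a1 ⬝ᵥ as k else 0 := by
        intro k hk
        rw [dotProduct_smul, smul_eq_mul, hortho j k hj (Finset.mem_range.mp hk)]
        by_cases h : j = k <;> simp [h]
      rw [Finset.sum_congr rfl this, Finset.sum_ite_eq]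
      simp [Finset.mem_range.mpr hj]
    rw [hsum, dotProduct_comm, sub_self]
  have hqa' : ∀ j, j < r → q ⬝ᵥ as j = 0 := fun j hj => by
    rw [dotProduct_comm]; exact hqa j hj
  have hqa1 : q ⬝ᵥ a1 = 1 - ∑ j ∈ Finset.range r, (a1 ⬝ᵥ as j) ^ 2 := by
    rw [dotProduct_comm, hqdef, dotProduct_sub, dot_sum', ha1dot]
    congr 1
    refine Finset.sum_congr rfl fun j _ => ?_
    rw [dotProduct_smul, smul_eq_mul, pow_two]
  have hqq : q ⬝ᵥ q = 1 - ∑ j ∈ Finset.range r, (a1 ⬝ᵥ as j) ^ 2 := by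
    conv_lhs => rw [hqdef]
    rw [show (a1 - ∑ j ∈ Finset.range r, (a1 ⬝ᵥ as j) • as j) ⬝ᵥ q
        = a1 ⬝ᵥ q - (∑ j ∈ Finset.range r, (a1 ⬝ᵥ as j) • as j) ⬝ᵥ q from sub_dotProduct _ _ _,
      dotProduct_comm a1 q, hqa1]
    have : (∑ j ∈ Finset.range r, (a1 ⬝ᵥ as j) • as j) ⬝ᵥ q = 0 := by
      rw [dotProduct_comm, dot_sum']
      refine Finset.sum_eq_zero fun j hj => ?_
      rw [dotProduct_smul, smul_eq_mul, dotProduct_comm, hqa' j (Finset.mem_range.mp hj), mul_zero]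
    rw [this, sub_zero]
  set t : ℝ := 1 - ∑ j ∈ Finset.range r, (a1 ⬝ᵥ as j) ^ 2 with htdef
  have ht0 : 0 ≤ t := by
    rw [← hqq, dotself']; positivity
  have hvq : vnorm q = Real.sqrt t := by rw [vnorm, ← dotself', hqq]
  -- key identity
  have hq_Mstar : q ⬝ᵥ Mstar.mulVec a1 = 0 := by
    rw [hMdot]
    refine Finset.sum_eq_zero fun j hj => ?_
    rw [hqa' j (Finset.mem_range.mp hj)]; ring
  have key : σ1 * t = q ⬝ᵥ H.mulVec a1 := by
    have h1 : q ⬝ᵥ M.mulVec a1 = σ1 * t := by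
      rw [heig, dotProduct_smul, smul_eq_mul, hqa1]
    rw [hM, add_mulVec, dotProduct_add, hq_Mstar, zero_add] at h1
    exact h1.symm
  have hkey2 : σ1 * t ≤ Real.sqrt t * ε := by
    calc σ1 * t = q ⬝ᵥ H.mulVec a1 := key
      _ ≤ |q ⬝ᵥ H.mulVec a1| := le_abs_self _
      _ ≤ vnorm q * ε := hHbound q a1 ha1
      _ = Real.sqrt t * ε := by rw [hvq]
  -- lower bound on σ1
  have ha0M : as 0 ⬝ᵥ Mstar.mulVec (as 0) = σs 0 := by
    rw [hMdot]
    have : ∀ j ∈ Finset.range r,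
        σs j * ((as 0 ⬝ᵥ as j) * (as j ⬝ᵥ as 0)) = if j = 0 then σs j else 0 := by
      intro j hj
      rw [hortho 0 j hr (Finset.mem_range.mp hj), hortho j 0 (Finset.mem_range.mp hj) hr]
      by_cases h : j = 0
      · subst h; simp
      · simp [h]
    rw [Finset.sum_congr rfl this, Finset.sum_ite_eq']
    simp [Finset.mem_range.mpr hr]
  have ha0H : -ε ≤ as 0 ⬝ᵥ H.mulVec (as 0) := by
    have h := hHbound (as 0) (as 0) (hunit 0 hr)
    rw [hunit 0 hr, one_mul] at h
    linarith [neg_abs_le (as 0 ⬝ᵥ H.mulVec (as 0))]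
  have hσ1lb : σs 0 - ε ≤ σ1 := by
    have h := htop (as 0)
    have h00 : as 0 ⬝ᵥ as 0 = (1 : ℝ) := by simpa using hortho 0 0 hr hr
    rw [hM, add_mulVec, dotProduct_add, ha0M, h00, mul_one] at h
    linarith
  have hσ1pos : 7 / 8 * σs 0 ≤ σ1 := by linarith
  have hσ1gt : 0 < σ1 := by linarith
  -- t ≤ ε²/σ1²  (in the form σ1² t ≤ ε²)
  have htle : σ1 ^ 2 * t ≤ ε ^ 2 := by
    rcases eq_or_lt_of_le ht0 with h | h
    · rw [← h, mul_zero]; positivity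
    · have hs : 0 < Real.sqrt t := Real.sqrt_pos.mpr h
      have hts : Real.sqrt t * Real.sqrt t = t := Real.mul_self_sqrt ht0
      have h1 : σ1 * Real.sqrt t ≤ ε := by nlinarith
      nlinarith [Real.sqrt_nonneg t]
  -- main bound
  have hmain : t ≤ 2.4 * ε ^ 2 / σs 0 ^ 2 := by
    rw [le_div_iff₀ (by positivity)]
    have hsq : (7 / 8 * σs 0) ^ 2 ≤ σ1 ^ 2 := by nlinarith
    have h49 : (7 / 8 * σs 0) ^ 2 * t ≤ σ1 ^ 2 * t := mul_le_mul_of_nonneg_right hsq ht0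
    nlinarith
  have goal1 : 1 - 2.4 * ε ^ 2 / σs 0 ^ 2 ≤ ∑ j ∈ Finset.range r, (a1 ⬝ᵥ as j) ^ 2 := by
    have : t = 1 - ∑ j ∈ Finset.range r, (a1 ⬝ᵥ as j) ^ 2 := htdef
    linarith
  refine ⟨goal1, ?_⟩
  have hsplit : ∑ j ∈ Finset.range r, (a1 ⬝ᵥ as j) ^ 2
      = (a1 ⬝ᵥ as 0) ^ 2 + ∑ j ∈ Finset.Ico 1 r, (a1 ⬝ᵥ as j) ^ 2 := by
    rw [Finset.range_eq_Ico, Finset.sum_eq_sum_Ico_succ_bot hr]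
  linarith
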